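/- Fix a real number k > 1. In the plane ℝ², define the family ℳ_k of Moulton lines: (1) vertical lines V_c = {(x,y) : x = c} for c ∈ ℝ; (2) lines of nonnegative slope G_{m,b} = {(x,y) : y = m·x + b} for m ≥ 0 and b ∈ ℝ; (3) for m < 0 and b ∈ ℝ, the bent lines B_{m,b} = {(x,y) : (x ≤ 0 and y = m·x + b) or (x ≥ 0 and y = k·m·x + b)}. Then any two distinct points of ℝ² lie on exactly one member of ℳ_k. -/

import Mathlib

/-- The lines of the Moulton plane `M_k`: vertical lines, lines of nonnegative
slope, and lines of negative slope `m` bent at the `y`-axis so that the slope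
in the right half plane becomes `k·m`. -/
def MoultonLines (k : ℝ) : Set (Set (ℝ × ℝ)) :=
  {L | (∃ c : ℝ, L = {p : ℝ × ℝ | p.1 = c}) ∨
       (∃ m b : ℝ, 0 ≤ m ∧ L = {p : ℝ × ℝ | p.2 = m * p.1 + b}) ∨
       (∃ m b : ℝ, m < 0 ∧
         L = {p : ℝ × ℝ | (p.1 ≤ 0 ∧ p.2 = m * p.1 + b) ∨
                          (0 ≤ p.1 ∧ p.2 = k * m * p.1 + b)})}

/-- The function whose graph is the bent line with parameters `m`, `b`. -/
noncomputable def bentF (k m b x : ℝ) : ℝ := if x ≤ 0 then m * x + b else k * m * x + b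

lemma mem_bent_iff (k m b x y : ℝ) :
    ((x ≤ 0 ∧ y = m * x + b) ∨ (0 ≤ x ∧ y = k * m * x + b)) ↔ y = bentF k m b x := by
  unfold bentF
  split_ifs with h
  · constructor
    · rintro (⟨_, h2⟩ | ⟨h1, h2⟩)
      · exact h2
      · have hx0 : x = 0 := le_antisymm h h1
        subst hx0; simpa using h2
    · intro hy; exact Or.inl ⟨h, hy⟩
  · constructor
    · rintro (⟨h1, _⟩ | ⟨_, h2⟩)
      · exact absurd h1 h
      · exact h2
    · intro hy; exact Or.inr ⟨le_of_lt (lt_of_not_ge h), hy⟩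

lemma bentF_strict_anti {k m : ℝ} (hk : 1 < k) (hm : m < 0) (b : ℝ) {x1 x2 : ℝ}
    (hx : x1 < x2) : bentF k m b x2 < bentF k m b x1 := by
  have hk0 : (0:ℝ) < k := lt_trans one_pos hk
  unfold bentF
  split_ifs with h1 h2 h2
  · nlinarith
  · exact absurd (le_of_lt (lt_of_lt_of_le hx h1)) h2
  · have hx2 : 0 < x2 := lt_of_not_ge h1
    nlinarith [mul_pos (mul_pos hk0 (neg_pos.mpr hm)) hx2,
      mul_nonneg (le_of_lt (neg_pos.mpr hm)) (neg_nonneg.mpr h2)]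
  · have hx2 : 0 < x2 := lt_of_not_ge h1
    have hx1 : 0 < x1 := lt_of_not_ge h2
    nlinarith [mul_pos (mul_pos hk0 (neg_pos.mpr hm)) (sub_pos.mpr hx)]

lemma bent_params_eq {k : ℝ} (hk : 0 < k) {m b m' b' x1 x2 : ℝ} (hx : x1 ≠ x2)
    (h1 : bentF k m b x1 = bentF k m' b' x1) (h2 : bentF k m b x2 = bentF k m' b' x2) :
    m = m' ∧ b = b' := by
  unfold bentF at h1 h2
  split_ifs at h1 h2 with s1 s2 s2
  · have hm : m = m' := by
      have hx' : x1 - x2 ≠ 0 := sub_ne_zero.mpr hx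
      have : (m - m') * (x1 - x2) = 0 := by linarith
      rcases mul_eq_zero.mp this with h | h
      · linarith
      · exact absurd h hx'
    exact ⟨hm, by subst hm; linarith⟩
  · -- x1 ≤ 0, x2 > 0
    have hx2 : 0 < x2 := lt_of_not_ge s2
    have hm : m = m' := by
      have hd : x1 - k * x2 < 0 := by nlinarith
      have : (m - m') * (x1 - k * x2) = 0 := by ring_nf; nlinarith [h1, h2]
      rcases mul_eq_zero.mp this with h | h
      · linarith
      · linarith
    exact ⟨hm, by subst hm; linarith⟩
  · -- x1 > 0, x2 ≤ 0
    have hx1 : 0 < x1 := lt_of_not_ge s1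
    have hm : m = m' := by
      have hd : x2 - k * x1 < 0 := by nlinarith
      have : (m - m') * (x2 - k * x1) = 0 := by ring_nf; nlinarith [h1, h2]
      rcases mul_eq_zero.mp this with h | h
      · linarith
      · linarith
    exact ⟨hm, by subst hm; linarith⟩
  · have hm : m = m' := by
      have hx' : x1 - x2 ≠ 0 := sub_ne_zero.mpr hx
      have : k * (m - m') * (x1 - x2) = 0 := by linarith [h1, h2]; 
      rcases mul_eq_zero.mp this with h | h
      · rcases mul_eq_zero.mp h with h' | h'
        · exact absurd h' (ne_of_gt hk)
        · linarith
      · exact absurd h hx'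
    exact ⟨hm, by subst hm; nlinarith⟩

lemma graph_params_eq {m b m' b' x1 x2 : ℝ} (hx : x1 ≠ x2)
    (h1 : m * x1 + b = m' * x1 + b') (h2 : m * x2 + b = m' * x2 + b') :
    m = m' ∧ b = b' := by
  have hm : m = m' := by
    have hx' : x1 - x2 ≠ 0 := sub_ne_zero.mpr hx
    have : (m - m') * (x1 - x2) = 0 := by linarith
    rcases mul_eq_zero.mp this with h | h
    · linarith
    · exact absurd h hx'
  exact ⟨hm, by subst hm; linarith⟩

/-- Any two Moulton lines through two distinct points coincide. -/
lemma moulton_unique {k : ℝ} (hk : 1 < k) {p q : ℝ × ℝ} (hpq : p ≠ q)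
    {L1 L2 : Set (ℝ × ℝ)} (h1 : L1 ∈ MoultonLines k) (h2 : L2 ∈ MoultonLines k)
    (hp1 : p ∈ L1) (hq1 : q ∈ L1) (hp2 : p ∈ L2) (hq2 : q ∈ L2) : L1 = L2 := by
  have hk0 : (0:ℝ) < k := lt_trans one_pos hk
  -- first: if p.1 = q.1 then any nonvertical line forces p.2 = q.2
  rcases h1 with ⟨c, rfl⟩ | ⟨m, b, hm, rfl⟩ | ⟨m, b, hm, rfl⟩ <;>
    rcases h2 with ⟨c', rfl⟩ | ⟨m', b', hm', rfl⟩ | ⟨m', b', hm', rfl⟩ <;>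
    simp only [Set.mem_setOf_eq] at hp1 hq1 hp2 hq2
  · -- V V
    have : c = c' := hp1.symm.trans hp2
    rw [this]
  · -- V G : p.1 = q.1 = c, so p.2 = q.2, contradiction
    exfalso
    have : p.2 = q.2 := by rw [hp2, hq2, hp1, hq1]
    exact hpq (Prod.ext (hp1.trans hq1.symm) this)
  · -- V B
    exfalso
    rw [mem_bent_iff] at hp2 hq2
    have : p.2 = q.2 := by rw [hp2, hq2, hp1, hq1]
    exact hpq (Prod.ext (hp1.trans hq1.symm) this)
  · -- G V
    exfalso
    have : p.2 = q.2 := by rw [hp1, hq1, hp2, hq2]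
    exact hpq (Prod.ext (hp2.trans hq2.symm) this)
  · -- G G
    have hx : p.1 ≠ q.1 := by
      intro h
      exact hpq (Prod.ext h (by rw [hp1, hq1, h]))
    obtain ⟨hmm, hbb⟩ := graph_params_eq hx (hp1.symm.trans hp2) (hq1.symm.trans hq2)
    rw [hmm, hbb]
  · -- G B : contradiction via monotonicity
    exfalso
    rw [mem_bent_iff] at hp2 hq2
    have hx : p.1 ≠ q.1 := by
      intro h
      exact hpq (Prod.ext h (by rw [hp1, hq1, h]))
    rcases lt_or_gt_of_ne hx with h | h
    · have hlt := bentF_strict_anti hk hm' b' h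
      rw [← hp2, ← hq2] at hlt
      nlinarith [hp1, hq1]
    · have hlt := bentF_strict_anti hk hm' b' h
      rw [← hp2, ← hq2] at hlt
      nlinarith [hp1, hq1]
  · -- B V
    exfalso
    rw [mem_bent_iff] at hp1 hq1
    have : p.2 = q.2 := by rw [hp1, hq1, hp2, hq2]
    exact hpq (Prod.ext (hp2.trans hq2.symm) this)
  · -- B G
    exfalso
    rw [mem_bent_iff] at hp1 hq1
    have hx : p.1 ≠ q.1 := by
      intro h
      exact hpq (Prod.ext h (by rw [hp1, hq1, h]))
    rcases lt_or_gt_of_ne hx with h | h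
    · have hlt := bentF_strict_anti hk hm b h
      rw [← hp1, ← hq1] at hlt
      nlinarith [hp2, hq2]
    · have hlt := bentF_strict_anti hk hm b h
      rw [← hp1, ← hq1] at hlt
      nlinarith [hp2, hq2]
  · -- B B
    rw [mem_bent_iff] at hp1 hq1 hp2 hq2
    have hx : p.1 ≠ q.1 := by
      intro h
      exact hpq (Prod.ext h (by rw [hp1, hq1, h]))
    obtain ⟨hmm, hbb⟩ := bent_params_eq hk0 hx (hp1.symm.trans hp2) (hq1.symm.trans hq2)
    rw [hmm, hbb]

/-- Existence of a Moulton line through two points with `p.1 < q.1`. -/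
lemma moulton_exists {k : ℝ} (hk : 1 < k) {p q : ℝ × ℝ} (h : p.1 < q.1) :
    ∃ L ∈ MoultonLines k, p ∈ L ∧ q ∈ L := by
  have hk0 : (0:ℝ) < k := lt_trans one_pos hk
  have hd : q.1 - p.1 ≠ 0 := by intro h'; linarith
  by_cases hs : p.2 ≤ q.2
  · -- nonnegative slope
    set m := (q.2 - p.2) / (q.1 - p.1) with hm
    have hm0 : 0 ≤ m := div_nonneg (by linarith) (by linarith)
    refine ⟨{r : ℝ × ℝ | r.2 = m * r.1 + (p.2 - m * p.1)},
      Or.inr (Or.inl ⟨m, p.2 - m * p.1, hm0, rfl⟩), by simp, ?_⟩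
    simp only [Set.mem_setOf_eq]
    field_simp [hm]
    have hmq : m * (q.1 - p.1) = q.2 - p.2 := by rw [hm]; exact div_mul_cancel₀ _ hd
    linear_combination -hmq
  · push_neg at hs
    by_cases hA : q.1 ≤ 0
    · -- both on the left
      set m := (q.2 - p.2) / (q.1 - p.1) with hmdef
      have hm0 : m < 0 := div_neg_of_neg_of_pos (by linarith) (by linarith)
      set b := p.2 - m * p.1 with hbdef
      refine ⟨_, Or.inr (Or.inr ⟨m, b, hm0, rfl⟩), ?_, ?_⟩ <;>
        simp only [Set.mem_setOf_eq, mem_bent_iff, bentF]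
      · rw [if_pos (by linarith : p.1 ≤ 0)]; ring
      · rw [if_pos hA, hbdef, hmdef]; field_simp; ring
    · push_neg at hA
      by_cases hB : 0 ≤ p.1
      · -- both on the right
        set m := (q.2 - p.2) / (k * (q.1 - p.1)) with hmdef
        have hm0 : m < 0 := div_neg_of_neg_of_pos (by linarith) (by nlinarith)
        set b := p.2 - k * m * p.1 with hbdef
        refine ⟨_, Or.inr (Or.inr ⟨m, b, hm0, rfl⟩), ?_, ?_⟩ <;>
          simp only [Set.mem_setOf_eq, mem_bent_iff, bentF]
        · by_cases hp0 : p.1 ≤ 0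
          · have h0 : p.1 = 0 := le_antisymm hp0 hB
            rw [if_pos hp0, hbdef, h0]; ring
          · rw [if_neg hp0]; ring
        · rw [if_neg (by linarith : ¬ q.1 ≤ 0), hbdef, hmdef]
          field_simp
          ring
      · -- p left, q right
        push_neg at hB
        set m := (p.2 - q.2) / (p.1 - k * q.1) with hmdef
        have hden : p.1 - k * q.1 < 0 := by nlinarith
        have hm0 : m < 0 := div_neg_of_pos_of_neg (by linarith) hden
        set b := p.2 - m * p.1 with hbdef
        refine ⟨_, Or.inr (Or.inr ⟨m, b, hm0, rfl⟩), ?_, ?_⟩ <;>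
          simp only [Set.mem_setOf_eq, mem_bent_iff, bentF]
        · rw [if_pos (le_of_lt hB)]; ring
        · rw [if_neg (by linarith : ¬ q.1 ≤ 0), hbdef, hmdef]
          have hden' : p.1 - k * q.1 ≠ 0 := ne_of_lt hden
          field_simp
          ring

/-- In the Moulton plane `M_k` (`k > 1`), any two distinct points lie on
exactly one line. -/
theorem moultonPlane_exists_unique_line (k : ℝ) (hk : 1 < k) (p q : ℝ × ℝ) (hpq : p ≠ q) :
    ∃! L : Set (ℝ × ℝ), L ∈ MoultonLines k ∧ p ∈ L ∧ q ∈ L := by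
  have hex : ∃ L ∈ MoultonLines k, p ∈ L ∧ q ∈ L := by
    rcases lt_trichotomy p.1 q.1 with h | h | h
    · exact moulton_exists hk h
    · -- vertical line
      exact ⟨{r : ℝ × ℝ | r.1 = p.1}, Or.inl ⟨p.1, rfl⟩, rfl, h.symm⟩
    · obtain ⟨L, hL, hqL, hpL⟩ := moulton_exists hk h
      exact ⟨L, hL, hpL, hqL⟩
  obtain ⟨L, hL, hpL, hqL⟩ := hex
  exact ⟨L, ⟨hL, hpL, hqL⟩, fun L' ⟨hL', hpL', hqL'⟩ =>
    moulton_unique hk hpq hL' hL hpL' hqL' hpL hqL⟩
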